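/- Under the same setting (finite X, i.i.d. samples, integrable G), for every ε ≥ 0, almost surely there exists R_0 such that for all R ≥ R_0, every ε/2-optimal solution of the SAA problem ĝ_R is an ε-optimal solution of the true problem g; in particular for ε = 0 and assuming the true problem has a unique optimizer, eventually the set of optimizers of ĝ_R is contained in the set of optimizers of g. -/
import Mathlib

open MeasureTheory ProbabilityTheory Filter

theorem stmt4 (X Ω : Type) [Fintype X] [Nonempty X] [MeasurableSpace Ω]
    (μ : Measure Ω) [IsProbabilityMeasure μ] (G : X → ℕ → Ω → ℝ)
    (hint : ∀ x r, Integrable (G x r) μ)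
    (hident : ∀ x r, IdentDistrib (G x r) (G x 0) μ μ)
    (hindep : ∀ x, Pairwise fun r s => IndepFun (G x r) (G x s) μ) :
    (∀ ε : ℝ, 0 < ε → ∀ᵐ ω ∂μ, ∃ R0 : ℕ, ∀ R ≥ R0, ∀ x : X,
        (∑ r ∈ Finset.range R, G x r ω) / R ≤
            (⨅ x', (∑ r ∈ Finset.range R, G x' r ω) / R) + ε / 2 →
        (∫ ω', G x 0 ω' ∂μ) ≤ (⨅ x', ∫ ω', G x' 0 ω' ∂μ) + ε)
    ∧ ((∃! xs : X, (∫ ω', G xs 0 ω' ∂μ) = ⨅ x', ∫ ω', G x' 0 ω' ∂μ) →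
        ∀ᵐ ω ∂μ, ∃ R0 : ℕ, ∀ R ≥ R0, ∀ x : X,
          (∑ r ∈ Finset.range R, G x r ω) / R =
              (⨅ x', (∑ r ∈ Finset.range R, G x' r ω) / R) →
          (∫ ω', G x 0 ω' ∂μ) = ⨅ x', ∫ ω', G x' 0 ω' ∂μ) := by
  classical
  set g : X → ℝ := fun x => ∫ ω', G x 0 ω' ∂μ with hg
  -- a.s. uniform convergence
  have hconv : ∀ᵐ ω ∂μ, ∀ x : X,
      Tendsto (fun R : ℕ => (∑ r ∈ Finset.range R, G x r ω) / R) atTop (nhds (g x)) := by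
    rw [ae_all_iff]
    intro x
    exact strong_law_ae_real (G x) (hint x 0) (hindep x) (hident x)
  -- basic facts about iInf of g
  have hbdd : ∀ (f : X → ℝ), BddBelow (Set.range f) := fun f => (Set.finite_range f).bddBelow
  have hginf_le : ∀ x, (⨅ x', g x') ≤ g x := fun x => ciInf_le (hbdd g) x
  have hmain : ∀ ε : ℝ, 0 < ε → ∀ᵐ ω ∂μ, ∃ R0 : ℕ, ∀ R ≥ R0, ∀ x : X,
      (∑ r ∈ Finset.range R, G x r ω) / R ≤
          (⨅ x', (∑ r ∈ Finset.range R, G x' r ω) / R) + ε / 2 →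
      g x ≤ (⨅ x', g x') + ε := by
    intro ε hε
    filter_upwards [hconv] with ω hω
    set gh : ℕ → X → ℝ := fun R x => (∑ r ∈ Finset.range R, G x r ω) / R with hgh
    have hev : ∀ᶠ R in atTop, ∀ x : X, |gh R x - g x| < ε / 8 := by
      rw [eventually_all]
      intro x
      have := (hω x).sub_const (g x)
      have h8 : (0:ℝ) < ε / 8 := by linarith
      have := Metric.tendsto_nhds.mp this (ε / 8) h8
      simpa [Real.dist_eq] using this
    obtain ⟨R0, hR0⟩ := eventually_atTop.mp hev
    refine ⟨R0, fun R hR x hx => ?_⟩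
    obtain ⟨xm, hxm⟩ := Finite.exists_min g
    have hginf : (⨅ x', g x') = g xm :=
      le_antisymm (hginf_le xm) (le_ciInf hxm)
    have h1 : |gh R x - g x| < ε / 8 := hR0 R hR x
    have h2 : |gh R xm - g xm| < ε / 8 := hR0 R hR xm
    have h3 : (⨅ x', gh R x') ≤ gh R xm := ciInf_le (hbdd _) xm
    rw [abs_lt] at h1 h2
    have hx' : gh R x ≤ (⨅ x', gh R x') + ε / 2 := hx
    rw [hginf]
    linarith
  refine ⟨hmain, ?_⟩
  rintro ⟨xs, hxs, huniq⟩
  -- gap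
  set ε0 : ℝ := Finset.univ.inf' Finset.univ_nonempty
      (fun x => if x = xs then 1 else g x - ⨅ x', g x') with hε0
  have hε0pos : 0 < ε0 := by
    rw [hε0]
    apply (Finset.lt_inf'_iff _).2
    intro x _
    by_cases hx : x = xs
    · simp [hx]
    · simp only [hx, if_false]
      have h1 : (⨅ x', g x') ≤ g x := hginf_le x
      have h2 : g x ≠ ⨅ x', g x' := fun h => hx (huniq x h)
      have := lt_of_le_of_ne h1 (Ne.symm h2)
      linarith
  have hε0le : ∀ x : X, x ≠ xs → ε0 ≤ g x - ⨅ x', g x' := by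
    intro x hx
    have h := Finset.inf'_le (f := fun x => if x = xs then 1 else g x - ⨅ x', g x')
      (Finset.mem_univ x)
    rw [if_neg hx] at h
    exact le_trans (le_of_eq hε0) h
  have hhalf : 0 < ε0 / 2 := by linarith
  filter_upwards [hmain (ε0 / 2) hhalf] with ω hω
  obtain ⟨R0, hR0⟩ := hω
  refine ⟨R0, fun R hR x hx => ?_⟩
  have hle : g x ≤ (⨅ x', g x') + ε0 / 2 := by
    apply hR0 R hR x
    rw [hx]
    linarith
  have hxxs : x = xs := by
    by_contra hne
    have := hε0le x hne
    linarith
  rw [hxxs]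
  exact hxs
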